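/- arXiv:1904.10672 — 2 statements merged into one kernel-verified Lean document; each statement's English description precedes it below -/
import Mathlib

section
/- Let λ > 0 and define F₁(λ, X) = C_Sob λ^{-1/9} X^{4/9} − ((b−1)/2) λ^{1/3} X^{2/3} + (2/5) X for X ≥ 0, where b > 1 and C_Sob = 3(2π)^{2/3}/4. If λ ≤ √(5/3) · 2^{5/2} · C_Sob^{3/2} / (b−1)^{5/2} = 3√10 π/(b−1)^{5/2}, then F₁(λ, X) ≥ 0 for all X ≥ 0. -/
open MeasureTheory Real Filter
open scoped ENNReal
noncomputable section

/-- If `λ ≤ √(5/3)·2^{5/2}·C_Sob^{3/2}/(b-1)^{5/2} = 3√10 π/(b-1)^{5/2}`, then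
`F₁(λ,X) = C_Sob λ^{-1/9} X^{4/9} − ((b−1)/2) λ^{1/3} X^{2/3} + (2/5) X ≥ 0`
for all `X ≥ 0`, where `C_Sob = 3(2π)^{2/3}/4`. -/
theorem stmt3 (b lam : ℝ) (hb : 1 < b) (hlam : 0 < lam)
    (hthr : lam ≤ Real.sqrt (5 / 3) * (2 : ℝ) ^ ((5 : ℝ) / 2) *
      (3 * (2 * π) ^ ((2 : ℝ) / 3) / 4) ^ ((3 : ℝ) / 2) / (b - 1) ^ ((5 : ℝ) / 2)) :
    ∀ X : ℝ, 0 ≤ X →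
      0 ≤ (3 * (2 * π) ^ ((2 : ℝ) / 3) / 4) * lam ^ (-(1 / 9) : ℝ) * X ^ ((4 : ℝ) / 9)
            - ((b - 1) / 2) * lam ^ ((1 : ℝ) / 3) * X ^ ((2 : ℝ) / 3)
            + (2 / 5) * X := by
  intro X hX
  set C : ℝ := 3 * (2 * π) ^ ((2 : ℝ) / 3) / 4 with hCdef
  have hCpos : 0 < C := by
    have : (0:ℝ) < (2 * π) ^ ((2 : ℝ) / 3) := Real.rpow_pos_of_pos (by positivity) _
    positivity
  have hb1 : (0:ℝ) < b - 1 := by linarith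
  rcases hX.eq_or_lt with rfl | hXpos
  · simp [Real.zero_rpow (by norm_num : ((4:ℝ)/9) ≠ 0),
      Real.zero_rpow (by norm_num : ((2:ℝ)/3) ≠ 0)]
  -- Step A: lam^(2/3) ≤ (5/3)^(1/3) * 2^(5/3) * C / (b-1)^(5/3)
  have hlam23 : lam ^ ((2:ℝ)/3) ≤ (5/3:ℝ) ^ ((1:ℝ)/3) * 2 ^ ((5:ℝ)/3) * C / (b-1) ^ ((5:ℝ)/3) := by
    have h1 : lam ^ ((2:ℝ)/3) ≤ (Real.sqrt (5 / 3) * (2 : ℝ) ^ ((5 : ℝ) / 2) *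
        C ^ ((3 : ℝ) / 2) / (b - 1) ^ ((5 : ℝ) / 2)) ^ ((2:ℝ)/3) :=
      Real.rpow_le_rpow hlam.le hthr (by norm_num)
    refine h1.trans_eq ?_
    rw [Real.sqrt_eq_rpow, div_rpow (by positivity) (by positivity),
      Real.mul_rpow (by positivity) (by positivity),
      Real.mul_rpow (by positivity) (by positivity),
      ← Real.rpow_mul (by norm_num : (0:ℝ) ≤ 5/3),
      ← Real.rpow_mul (by norm_num : (0:ℝ) ≤ 2),
      ← Real.rpow_mul hCpos.le,
      ← Real.rpow_mul hb1.le]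
    norm_num [Real.rpow_one]
  -- hence ((b-1)/2)^(5/3) * lam^(2/3) ≤ (5/3) * C
  have hkey : ((b-1)/2) ^ ((5:ℝ)/3) * lam ^ ((2:ℝ)/3) ≤ (5/3) * C := by
    have hsplit : ((b-1)/2) ^ ((5:ℝ)/3) = (b-1) ^ ((5:ℝ)/3) / 2 ^ ((5:ℝ)/3) :=
      Real.div_rpow hb1.le (by norm_num : (0:ℝ) ≤ 2) _
    have hb53 : (0:ℝ) < (b-1) ^ ((5:ℝ)/3) := Real.rpow_pos_of_pos hb1 _
    have h253 : (0:ℝ) < (2:ℝ) ^ ((5:ℝ)/3) := Real.rpow_pos_of_pos (by norm_num) _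
    have h2 : ((b-1)/2) ^ ((5:ℝ)/3) * lam ^ ((2:ℝ)/3) ≤
        ((b-1) ^ ((5:ℝ)/3) / 2 ^ ((5:ℝ)/3)) *
          ((5/3:ℝ) ^ ((1:ℝ)/3) * 2 ^ ((5:ℝ)/3) * C / (b-1) ^ ((5:ℝ)/3)) := by
      rw [hsplit]
      exact mul_le_mul_of_nonneg_left hlam23 (by positivity)
    have h3 : ((b-1) ^ ((5:ℝ)/3) / 2 ^ ((5:ℝ)/3)) *
          ((5/3:ℝ) ^ ((1:ℝ)/3) * 2 ^ ((5:ℝ)/3) * C / (b-1) ^ ((5:ℝ)/3)) =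
        (5/3:ℝ) ^ ((1:ℝ)/3) * C := by
      field_simp
    have h4 : (5/3:ℝ) ^ ((1:ℝ)/3) ≤ 5/3 := by
      calc (5/3:ℝ) ^ ((1:ℝ)/3) ≤ (5/3:ℝ) ^ ((1:ℝ)) :=
            Real.rpow_le_rpow_of_exponent_le (by norm_num) (by norm_num)
        _ = 5/3 := Real.rpow_one _
    calc ((b-1)/2) ^ ((5:ℝ)/3) * lam ^ ((2:ℝ)/3) ≤ (5/3:ℝ) ^ ((1:ℝ)/3) * C := h2.trans_eq h3
      _ ≤ (5/3) * C := mul_le_mul_of_nonneg_right h4 hCpos.le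
  -- AM-GM step
  set k : ℝ := ((b-1)/2) ^ ((5:ℝ)/3) * lam ^ ((5:ℝ)/9) with hkdef
  have hkpos : 0 < k := by
    have := Real.rpow_pos_of_pos (show (0:ℝ) < (b-1)/2 by linarith) ((5:ℝ)/3)
    have := Real.rpow_pos_of_pos hlam ((5:ℝ)/9)
    positivity
  have hX49 : (0:ℝ) < X ^ ((4:ℝ)/9) := Real.rpow_pos_of_pos hXpos _
  have amgm := Real.geom_mean_le_arith_mean2_weighted
    (by norm_num : (0:ℝ) ≤ 3/5) (by norm_num : (0:ℝ) ≤ 2/5)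
    (mul_nonneg hkpos.le hX49.le) hXpos.le (by norm_num : (3:ℝ)/5 + 2/5 = 1)
  have hlhs : (k * X ^ ((4:ℝ)/9)) ^ ((3:ℝ)/5) * X ^ ((2:ℝ)/5) =
      ((b-1)/2) * lam ^ ((1:ℝ)/3) * X ^ ((2:ℝ)/3) := by
    rw [Real.mul_rpow hkpos.le hX49.le, hkdef,
      Real.mul_rpow (by positivity) (by positivity),
      ← Real.rpow_mul (show (0:ℝ) ≤ (b-1)/2 by linarith),
      ← Real.rpow_mul hlam.le, ← Real.rpow_mul hXpos.le,
      mul_assoc, ← Real.rpow_add hXpos]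
    norm_num [Real.rpow_one]
  rw [hlhs] at amgm
  -- (3/5) * k ≤ C * lam^(-1/9)
  have hk35 : (3/5) * k ≤ C * lam ^ (-(1/9) : ℝ) := by
    have hsplit : lam ^ ((5:ℝ)/9) = lam ^ ((2:ℝ)/3) * lam ^ (-(1/9) : ℝ) := by
      rw [← Real.rpow_add hlam]; norm_num
    have hlneg : (0:ℝ) < lam ^ (-(1/9) : ℝ) := Real.rpow_pos_of_pos hlam _
    have : (3/5) * k = (3/5) * (((b-1)/2) ^ ((5:ℝ)/3) * lam ^ ((2:ℝ)/3)) * lam ^ (-(1/9):ℝ) := by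
      rw [hkdef, hsplit]; ring
    rw [this]
    calc (3/5) * (((b-1)/2) ^ ((5:ℝ)/3) * lam ^ ((2:ℝ)/3)) * lam ^ (-(1/9):ℝ)
        ≤ (3/5) * ((5/3) * C) * lam ^ (-(1/9):ℝ) := by
          apply mul_le_mul_of_nonneg_right _ hlneg.le
          exact mul_le_mul_of_nonneg_left hkey (by norm_num)
      _ = C * lam ^ (-(1/9):ℝ) := by ring
  have hfinal : ((b-1)/2) * lam ^ ((1:ℝ)/3) * X ^ ((2:ℝ)/3) ≤
      C * lam ^ (-(1/9) : ℝ) * X ^ ((4:ℝ)/9) + (2/5) * X := by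
    calc ((b-1)/2) * lam ^ ((1:ℝ)/3) * X ^ ((2:ℝ)/3)
        ≤ (3/5) * (k * X ^ ((4:ℝ)/9)) + (2/5) * X := amgm
      _ = ((3/5) * k) * X ^ ((4:ℝ)/9) + (2/5) * X := by ring
      _ ≤ C * lam ^ (-(1/9) : ℝ) * X ^ ((4:ℝ)/9) + (2/5) * X := by
          have := mul_le_mul_of_nonneg_right hk35 hX49.le
          linarith
  linarith
end
end

section
/- Let Ω : 𝕊² → ℝ be continuous with ∫_{𝕊²} Ω dσ = 0 and extend K(x) = Ω(x/|x|)/|x|³. Let ψ ∈ C^{0,α}(ℝ³) ∩ L²(ℝ³) ∩ L^∞(ℝ³) for some α ∈ (0,1]. Then the principal value convolution K ⋆ ψ² tends to zero at infinity: for every ε > 0 there exists R_ε > 0 such that |K ⋆ ψ²(x)| < ε whenever |x| > R_ε. -/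
open MeasureTheory Real Filter
open scoped ENNReal
noncomputable section

abbrev E3 := EuclideanSpace ℝ (Fin 3)

open scoped Topology

set_option maxHeartbeats 1000000

lemma shift_int (f : E3 → ℝ) (x : E3) (s : Set E3) :
    ∫ z in s, f z = ∫ y in (fun y => x - y) ⁻¹' s, f (x - y) := by
  have hmp : MeasurePreserving (fun t => x - t) (volume : Measure E3) volume :=
    Measure.measurePreserving_sub_left volume x
  have hme : MeasurableEmbedding (fun t : E3 => x - t) :=
    (MeasurableEquiv.subLeft x).measurableEmbedding
  calc ∫ z in s, f z = ∫ z in s, f z ∂(Measure.map (fun t => x - t) volume) := by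
        rw [hmp.map_eq]
    _ = ∫ y in (fun y => x - y) ⁻¹' s, f (x - y) := hme.setIntegral_map _ _

lemma div_cube_mono {a b c : ℝ} (ha : 0 ≤ a) (hb : 0 < b) (hbc : b ≤ c) :
    a / c ^ 3 ≤ a / b ^ 3 := by
  gcongr

section
open Set

lemma rpow_integrableOn (α : ℝ) (hα : 0 < α) (hα1 : α ≤ 1) :
    IntegrableOn (fun z : E3 => ‖z‖ ^ (α - 3)) {z : E3 | 0 < ‖z‖ ∧ ‖z‖ < 1} volume := by
  set q : ℝ := 1/2 with hq
  have hq0 : (0:ℝ) < q := by norm_num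
  have hq1 : q < 1 := by norm_num
  set A : ℕ → Set E3 := fun k => {z | q ^ (k+1) ≤ ‖z‖ ∧ ‖z‖ < q ^ k} with hA
  have hAmeas : ∀ k, MeasurableSet (A k) := fun k =>
    ((isClosed_le continuous_const continuous_norm).measurableSet).inter
      ((isOpen_lt continuous_norm continuous_const).measurableSet)
  have hmeas : Measurable (fun z : E3 => ‖z‖ ^ (α - 3)) :=
    measurable_norm.pow measurable_const
  have hU : {z : E3 | 0 < ‖z‖ ∧ ‖z‖ < 1} = ⋃ k, A k := by
    ext z
    simp only [mem_setOf_eq, mem_iUnion, hA]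
    constructor
    · rintro ⟨h0, h1⟩
      have hex : ∃ n, q ^ (n+1) ≤ ‖z‖ := by
        obtain ⟨n, hn⟩ := exists_pow_lt_of_lt_one h0 hq1
        exact ⟨n, le_of_lt (lt_of_le_of_lt (pow_le_pow_of_le_one hq0.le hq1.le (by omega)) hn)⟩
      classical
      refine ⟨Nat.find hex, Nat.find_spec hex, ?_⟩
      rcases Nat.eq_zero_or_pos (Nat.find hex) with h | h
      · rw [h]; simpa using h1
      · have := Nat.find_min hex (m := Nat.find hex - 1) (by omega)
        push_neg at this
        calc ‖z‖ < q ^ (Nat.find hex - 1 + 1) := this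
          _ = q ^ Nat.find hex := by congr 1; omega
    · rintro ⟨k, hk1, hk2⟩
      exact ⟨lt_of_lt_of_le (pow_pos hq0 _) hk1,
        lt_of_lt_of_le hk2 (pow_le_one₀ hq0.le hq1.le)⟩
  rw [hU]
  have hball : ∀ k, A k ⊆ Metric.ball (0:E3) (q ^ k) := by
    intro k z hz
    simpa [Metric.mem_ball] using hz.2
  have hvol : ∀ k, volume (A k) < ⊤ := fun k =>
    lt_of_le_of_lt (measure_mono (hball k)) measure_ball_lt_top
  have hbd : ∀ k, ∀ z ∈ A k, ‖‖z‖ ^ (α - 3)‖ ≤ (q ^ (k+1)) ^ (α - 3) := by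
    intro k z hz
    have h0 : (0:ℝ) < q ^ (k+1) := pow_pos hq0 _
    rw [Real.norm_eq_abs, abs_of_nonneg (Real.rpow_nonneg (norm_nonneg z) _)]
    exact Real.rpow_le_rpow_of_nonpos h0 hz.1 (by linarith)
  have hint : ∀ k, IntegrableOn (fun z : E3 => ‖z‖ ^ (α - 3)) (A k) volume := by
    intro k
    refine Measure.integrableOn_of_bounded (M := (q ^ (k+1)) ^ (α - 3)) (hvol k).ne hmeas.aestronglyMeasurable ?_
    exact ae_restrict_of_forall_mem (hAmeas k) (hbd k)
  refine integrableOn_iUnion_of_summable_integral_norm hint ?_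
  set v : ℝ := (volume (Metric.ball (0:E3) 1)).toReal with hv
  have hv0 : 0 ≤ v := ENNReal.toReal_nonneg
  have hAk_vol : ∀ k, (volume (A k)).toReal ≤ (q ^ k) ^ (3:ℕ) * v := by
    intro k
    have h1 : volume (A k) ≤ volume (Metric.ball (0:E3) (q^k)) := measure_mono (hball k)
    have h2 : volume (Metric.ball (0:E3) (q^k)) =
        ENNReal.ofReal ((q^k) ^ Module.finrank ℝ E3) * volume (Metric.ball (0:E3) 1) :=
      Measure.addHaar_ball volume 0 (pow_pos hq0 k).le
    have h3 : (volume (Metric.ball (0:E3) (q^k))).toReal = (q^k) ^ (3:ℕ) * v := by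
      rw [h2, ENNReal.toReal_mul, ENNReal.toReal_ofReal (by positivity)]
      congr 2
      simp [finrank_euclideanSpace]
    rw [← h3]
    exact ENNReal.toReal_mono measure_ball_lt_top.ne h1
  have hterm : ∀ k, (∫ z in A k, ‖‖z‖ ^ (α - 3)‖) ≤
      ((q ^ (k+1)) ^ (α - 3) * ((q ^ k) ^ (3:ℕ) * v)) := by
    intro k
    have h1 : (∫ z in A k, ‖‖z‖ ^ (α - 3)‖) ≤ (q ^ (k+1)) ^ (α-3) * (volume (A k)).toReal := by
      have := norm_setIntegral_le_of_norm_le_const (μ := volume) (hvol k)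
        (f := fun z : E3 => ‖‖z‖ ^ (α - 3)‖) (C := (q ^ (k+1)) ^ (α - 3))
        (fun z hz => by simpa using hbd k z hz)
      calc (∫ z in A k, ‖‖z‖ ^ (α - 3)‖) ≤ ‖∫ z in A k, ‖‖z‖ ^ (α - 3)‖‖ := le_abs_self _
        _ ≤ _ := this
    refine h1.trans ?_
    have h2 : (0:ℝ) ≤ (q ^ (k+1)) ^ (α - 3) := Real.rpow_nonneg (by positivity) _
    exact mul_le_mul_of_nonneg_left (hAk_vol k) h2
  have hsum : Summable (fun k : ℕ => (q ^ (k+1)) ^ (α - 3) * ((q ^ k) ^ (3:ℕ) * v)) := by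
    have hrw : ∀ k : ℕ, (q ^ (k+1)) ^ (α - 3) * ((q ^ k) ^ (3:ℕ) * v) =
        (q ^ (α - 3) * v) * (q ^ α) ^ k := by
      intro k
      have hqpow : ∀ (n : ℕ) (c : ℝ), ((q:ℝ) ^ n) ^ c = q ^ ((n:ℝ) * c) := by
        intro n c
        rw [← Real.rpow_natCast q n, ← Real.rpow_mul hq0.le]
      have h1 : ((q:ℝ) ^ (k+1)) ^ (α - 3) = q ^ (((k:ℝ)+1) * (α - 3)) := by
        rw [hqpow (k+1) (α-3)]; push_cast; ring_nf
      have h2 : ((q:ℝ) ^ k) ^ (3:ℕ) = q ^ ((k:ℝ) * 3) := by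
        rw [← Real.rpow_natCast (q ^ k) 3, hqpow k ((3:ℕ):ℝ)]; norm_num
      have h3 : ((q:ℝ) ^ α) ^ k = q ^ ((k:ℝ) * α) := by
        rw [← Real.rpow_natCast (q ^ α) k, ← Real.rpow_mul hq0.le, mul_comm]
      have e1 : ((k:ℝ)+1) * (α - 3) + (k:ℝ)*3 = (α - 3) + (k:ℝ)*α := by ring
      rw [h1, h2, h3, ← mul_assoc, ← Real.rpow_add hq0, e1, Real.rpow_add hq0]
      ring
    simp only [hrw]
    apply Summable.mul_left
    refine summable_geometric_of_lt_one (Real.rpow_nonneg hq0.le _) ?_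
    exact Real.rpow_lt_one hq0.le hq1 hα
  refine Summable.of_nonneg_of_le (fun k => ?_) hterm hsum
  exact setIntegral_nonneg (hAmeas k) (fun z _ => norm_nonneg _)

end

/-- The principal value convolution `K ⋆ ψ²` of a Hölder continuous, bounded and
square-integrable `ψ²` against a kernel `K(x) = Ω(x/|x|)/|x|³` with zero angular
average tends to `0` at infinity. -/
theorem stmt10 (Ω : E3 → ℝ) (hΩcont : ContinuousOn Ω {(0 : E3)}ᶜ)
    (hΩhom : ∀ s : ℝ, 0 < s → ∀ x : E3, x ≠ 0 → Ω (s • x) = Ω x)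
    (K : E3 → ℝ) (hKdef : ∀ x : E3, x ≠ 0 → K x = Ω x / ‖x‖ ^ 3)
    (hcancel : ∀ r R : ℝ, 0 < r → r < R →
      (∫ x in {x : E3 | r < ‖x‖ ∧ ‖x‖ < R}, K x) = 0)
    (ψ : E3 → ℝ) (α : ℝ) (hα : 0 < α) (hα1 : α ≤ 1)
    (hHol : ∃ C : ℝ, 0 < C ∧ ∀ x y : E3, |ψ x - ψ y| ≤ C * ‖x - y‖ ^ α)
    (hψ2 : MemLp ψ 2 volume) (hψinf : ∃ M : ℝ, ∀ x : E3, |ψ x| ≤ M)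
    (g : E3 → ℝ)
    (hg : ∀ x : E3, Tendsto (fun δ : ℝ =>
        ∫ y in {y : E3 | δ < ‖x - y‖}, K (x - y) * ψ y ^ 2)
      (nhdsWithin 0 (Set.Ioi 0)) (nhds (g x))) :
    ∀ ε : ℝ, 0 < ε → ∃ R : ℝ, 0 < R ∧ ∀ x : E3, R < ‖x‖ → |g x| < ε := by
  intro ε hε
  obtain ⟨C, hC, hHol⟩ := hHol
  obtain ⟨M0, hM0⟩ := hψinf
  set M : ℝ := max M0 0 with hMdef
  have hM : ∀ x, |ψ x| ≤ M := fun x => (hM0 x).trans (le_max_left _ _)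
  have hMnn : 0 ≤ M := le_max_right _ _
  -- bound on Ω
  have hsph : (Metric.sphere (0:E3) 1 : Set E3) ⊆ {(0:E3)}ᶜ := by
    intro z hz
    simp only [Metric.mem_sphere, dist_zero_right] at hz
    simp only [Set.mem_compl_iff, Set.mem_singleton_iff]
    intro h
    rw [h] at hz; simp at hz
  obtain ⟨MΩ0, hMΩ0⟩ := (isCompact_sphere (0:E3) 1).exists_bound_of_continuousOn
    (hΩcont.mono hsph)
  set MΩ : ℝ := max MΩ0 0 with hMΩdef
  have hMΩnn : 0 ≤ MΩ := le_max_right _ _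
  have hΩbd : ∀ z : E3, z ≠ 0 → |Ω z| ≤ MΩ := by
    intro z hz
    have hz0 : 0 < ‖z‖ := norm_pos_iff.mpr hz
    have h1 : Ω (‖z‖⁻¹ • z) = Ω z := hΩhom _ (inv_pos.mpr hz0) z hz
    have h2 : ‖z‖⁻¹ • z ∈ Metric.sphere (0:E3) 1 := by
      simp only [Metric.mem_sphere, dist_zero_right, norm_smul, norm_inv, norm_norm]
      field_simp
    have h3 := hMΩ0 _ h2
    rw [h1] at h3
    exact h3.trans (le_max_left _ _)
  have hKbd : ∀ z : E3, z ≠ 0 → |K z| ≤ MΩ / ‖z‖ ^ 3 := by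
    intro z hz
    have hz0 : 0 < ‖z‖ := norm_pos_iff.mpr hz
    rw [hKdef z hz, abs_div, abs_of_pos (by positivity : (0:ℝ) < ‖z‖ ^ 3)]
    gcongr
    exact hΩbd z hz
  -- measurability of K
  have hKcont : ContinuousOn K ({(0:E3)}ᶜ) := by
    refine ContinuousOn.congr (ContinuousOn.div hΩcont
      ((continuous_norm.pow 3).continuousOn) ?_) ?_
    · intro z hz
      exact pow_ne_zero _ (norm_ne_zero_iff.mpr hz)
    · intro z hz
      exact hKdef z hz
  have hKaesm : AEStronglyMeasurable K volume := by
    have h1 : AEStronglyMeasurable K ((volume : Measure E3).restrict {(0:E3)}ᶜ) :=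
      hKcont.aestronglyMeasurable isOpen_compl_singleton.measurableSet
    have h2 : (volume : Measure E3).restrict {(0:E3)}ᶜ = volume := by
      have he : ({(0:E3)}ᶜ : Set E3) =ᵐ[volume] Set.univ := by
        rw [ae_eq_univ, compl_compl]
        exact measure_singleton 0
      rw [Measure.restrict_congr_set he, Measure.restrict_univ]
    rwa [h2] at h1
  have hKsub : ∀ x : E3, AEStronglyMeasurable (fun y => K (x - y)) volume := by
    intro x
    exact hKaesm.comp_quasiMeasurePreserving
      (Measure.measurePreserving_sub_left volume x).quasiMeasurePreserving
  -- ψ² facts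
  have hψsq_aesm : AEStronglyMeasurable (fun y => ψ y ^ 2) volume := hψ2.integrable_sq.1
  have hintψ2 : Integrable (fun y => ψ y ^ 2) volume := hψ2.integrable_sq
  set Iψ : ℝ := ∫ y, ψ y ^ 2 with hIψdef
  have hIψnn : 0 ≤ Iψ := integral_nonneg (fun y => sq_nonneg _)
  -- key integrability
  have hfint : ∀ (x : E3) (c : ℝ), 0 < c →
      IntegrableOn (fun y => K (x - y) * ψ y ^ 2) {y : E3 | c ≤ ‖x - y‖} volume := by
    intro x c hc
    have hmeasS : MeasurableSet {y : E3 | c ≤ ‖x - y‖} :=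
      (isClosed_le continuous_const ((continuous_const.sub continuous_id).norm)).measurableSet
    refine Integrable.mono' ((hintψ2.const_mul (MΩ / c ^ 3)).integrableOn)
      (((hKsub x).mul hψsq_aesm).restrict) ?_
    filter_upwards [ae_restrict_mem hmeasS] with y hy
    have hy' : c ≤ ‖x - y‖ := hy
    have hxy : x - y ≠ 0 := by
      intro h
      rw [h] at hy'; simp at hy'; linarith
    rw [Real.norm_eq_abs, abs_mul, abs_of_nonneg (sq_nonneg (ψ y))]
    have h1 : |K (x - y)| ≤ MΩ / c ^ 3 :=
      (hKbd _ hxy).trans (div_cube_mono hMΩnn hc hy')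
    exact mul_le_mul_of_nonneg_right h1 (sq_nonneg _)
  -- the rpow majorant
  set hb : E3 → ℝ := fun z => ‖z‖ ^ (α - 3) with hbdef
  have hbnn : ∀ z, 0 ≤ hb z := fun z => Real.rpow_nonneg (norm_nonneg _) _
  have hbmeas : Measurable hb := measurable_norm.pow measurable_const
  have hbint1 : IntegrableOn hb {z : E3 | 0 < ‖z‖ ∧ ‖z‖ < 1} volume :=
    rpow_integrableOn α hα hα1
  have hUmeas : ∀ t : ℝ, MeasurableSet {z : E3 | 0 < ‖z‖ ∧ ‖z‖ < t} := fun t =>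
    ((isOpen_lt continuous_const continuous_norm).measurableSet).inter
      ((isOpen_lt continuous_norm continuous_const).measurableSet)
  set B : ℝ := 2 * M * C * MΩ with hBdef
  have hBnn : 0 ≤ B := by positivity
  -- choice of r via dominated convergence
  have hJten : Tendsto (fun n : ℕ =>
      ∫ z in {z : E3 | 0 < ‖z‖ ∧ ‖z‖ < 1/((n:ℝ)+1)}, hb z) atTop (𝓝 0) := by
    have hdom : Integrable (Set.indicator {z : E3 | 0 < ‖z‖ ∧ ‖z‖ < 1} hb) volume :=
      (integrable_indicator_iff (hUmeas 1)).mpr hbint1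
    have key : Tendsto (fun n : ℕ =>
        ∫ z, Set.indicator {z : E3 | 0 < ‖z‖ ∧ ‖z‖ < 1/((n:ℝ)+1)} hb z) atTop (𝓝 (∫ _ : E3, (0:ℝ))) := by
      refine tendsto_integral_of_dominated_convergence _ (fun n =>
        ((hbmeas.indicator (hUmeas _)).aestronglyMeasurable)) hdom ?_ ?_
      · intro n
        refine Filter.Eventually.of_forall (fun z => ?_)
        by_cases hz : z ∈ {z : E3 | 0 < ‖z‖ ∧ ‖z‖ < 1/((n:ℝ)+1)}
        · rw [Set.indicator_of_mem hz, Real.norm_eq_abs, abs_of_nonneg (hbnn z)]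
          have hz' : z ∈ {z : E3 | 0 < ‖z‖ ∧ ‖z‖ < 1} := by
            refine ⟨hz.1, lt_of_lt_of_le hz.2 ?_⟩
            rw [div_le_one (by positivity)]
            have : (0:ℝ) ≤ (n:ℝ) := Nat.cast_nonneg n
            linarith
          rw [Set.indicator_of_mem hz']
        · rw [Set.indicator_of_notMem hz]
          simp only [norm_zero]
          exact Set.indicator_nonneg (fun z _ => hbnn z) _
      · refine Filter.Eventually.of_forall (fun z => ?_)
        by_cases hz : ‖z‖ = 0
        · have : ∀ n : ℕ, Set.indicator {z : E3 | 0 < ‖z‖ ∧ ‖z‖ < 1/((n:ℝ)+1)} hb z = 0 := by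
            intro n
            apply Set.indicator_of_notMem
            intro h
            simp only [Set.mem_setOf_eq] at h
            rw [hz] at h
            exact lt_irrefl 0 h.1
          simp only [this]
          exact tendsto_const_nhds
        · have hz0 : 0 < ‖z‖ := lt_of_le_of_ne (norm_nonneg z) (Ne.symm hz)
          obtain ⟨N, hN⟩ := exists_nat_gt (1/‖z‖)
          refine Tendsto.congr' ?_ tendsto_const_nhds
          filter_upwards [eventually_ge_atTop N] with n hn
          refine (Set.indicator_of_notMem ?_ _).symm
          intro h
          have h2 : 1/((n:ℝ)+1) < ‖z‖ := by
            rw [div_lt_iff₀ (by positivity)]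
            rw [div_lt_iff₀ hz0] at hN
            have : (N:ℝ) ≤ (n:ℝ) := Nat.cast_le.mpr hn
            nlinarith [norm_nonneg z]
          exact absurd h.2 (not_lt.mpr h2.le)
    simpa only [integral_zero, integral_indicator (hUmeas _)] using key
  have hBJten : Tendsto (fun n : ℕ =>
      B * ∫ z in {z : E3 | 0 < ‖z‖ ∧ ‖z‖ < 1/((n:ℝ)+1)}, hb z) atTop (𝓝 0) := by
    have := hJten.const_mul B
    rwa [mul_zero] at this
  obtain ⟨n₀, hn₀⟩ := (hBJten.eventually_lt_const (by linarith : (0:ℝ) < ε/4)).exists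
  set r : ℝ := 1/((n₀:ℝ)+1) with hrdef
  have hr0 : 0 < r := by positivity
  have hr1 : r ≤ 1 := by
    rw [hrdef, div_le_one (by positivity)]
    have : (0:ℝ) ≤ (n₀:ℝ) := Nat.cast_nonneg n₀
    linarith
  set Jr : ℝ := ∫ z in {z : E3 | 0 < ‖z‖ ∧ ‖z‖ < r}, hb z with hJrdef
  have hBJr : B * Jr < ε/4 := hn₀
  have hbintr : IntegrableOn hb {z : E3 | 0 < ‖z‖ ∧ ‖z‖ < r} volume :=
    hbint1.mono_set (fun z hz => ⟨hz.1, lt_of_lt_of_le hz.2 hr1⟩)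
  -- choice of tail cutoff
  have hTten : Tendsto (fun n : ℕ =>
      ∫ y in {y : E3 | (n:ℝ) < ‖y‖}, ψ y ^ 2) atTop (𝓝 0) := by
    have hSm : ∀ t : ℝ, MeasurableSet {y : E3 | t < ‖y‖} := fun t =>
      (isOpen_lt continuous_const continuous_norm).measurableSet
    have key : Tendsto (fun n : ℕ =>
        ∫ y, Set.indicator {y : E3 | (n:ℝ) < ‖y‖} (fun y => ψ y ^ 2) y) atTop
        (𝓝 (∫ _ : E3, (0:ℝ))) := by
      refine tendsto_integral_of_dominated_convergence (fun y => ψ y ^ 2)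
        (fun n => hψsq_aesm.indicator (hSm _)) hintψ2 ?_ ?_
      · intro n
        refine Filter.Eventually.of_forall (fun y => ?_)
        by_cases hy : y ∈ {y : E3 | (n:ℝ) < ‖y‖}
        · rw [Set.indicator_of_mem hy, Real.norm_eq_abs, abs_of_nonneg (sq_nonneg _)]
        · rw [Set.indicator_of_notMem hy]
          simp only [norm_zero]
          exact sq_nonneg _
      · refine Filter.Eventually.of_forall (fun y => ?_)
        obtain ⟨N, hN⟩ := exists_nat_gt ‖y‖
        refine Tendsto.congr' ?_ tendsto_const_nhds
        filter_upwards [eventually_ge_atTop N] with n hn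
        refine (Set.indicator_of_notMem ?_ _).symm
        intro h
        have : (N:ℝ) ≤ (n:ℝ) := Nat.cast_le.mpr hn
        have h2 : ‖y‖ < (n:ℝ) := lt_of_lt_of_le hN this
        exact absurd h (not_lt.mpr h2.le)
    simpa only [integral_zero, integral_indicator (hSm _)] using key
  have hTten' : Tendsto (fun n : ℕ =>
      (MΩ / r ^ 3) * ∫ y in {y : E3 | (n:ℝ) < ‖y‖}, ψ y ^ 2) atTop (𝓝 0) := by
    have := hTten.const_mul (MΩ / r ^ 3)
    rwa [mul_zero] at this
  obtain ⟨n₁, hn₁⟩ := (hTten'.eventually_lt_const (by linarith : (0:ℝ) < ε/4)).exists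
  -- choice of R
  set R : ℝ := max (2*(n₁:ℝ) + 1) (32*MΩ*Iψ/ε + 1) with hRdef
  have hR1 : 1 ≤ R := by
    refine le_trans ?_ (le_max_left _ _)
    have : (0:ℝ) ≤ (n₁:ℝ) := Nat.cast_nonneg _
    linarith
  have hR0 : 0 < R := by linarith
  refine ⟨R, hR0, ?_⟩
  intro x hx
  have hx1 : 1 ≤ ‖x‖ := le_trans hR1 hx.le
  have hx0 : 0 < ‖x‖ := by linarith
  -- sets
  set far : Set E3 := {y : E3 | r ≤ ‖x - y‖} with hfardef
  have hfarMeas : MeasurableSet far :=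
    (isClosed_le continuous_const ((continuous_const.sub continuous_id).norm)).measurableSet
  set F : ℝ := ∫ y in far, K (x - y) * ψ y ^ 2 with hFdef
  have hintFar : IntegrableOn (fun y => K (x - y) * ψ y ^ 2) far volume := hfint x r hr0
  -- Step 1: |g x - F| ≤ B * Jr
  have hIF : ∀ δ : ℝ, 0 < δ → δ < r →
      |(∫ y in {y : E3 | δ < ‖x - y‖}, K (x - y) * ψ y ^ 2) - F| ≤ B * Jr := by
    intro δ hδ hδr
    set ann : Set E3 := {y : E3 | δ < ‖x - y‖ ∧ ‖x - y‖ < r} with hanndef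
    have hannMeas : MeasurableSet ann :=
      ((isOpen_lt continuous_const ((continuous_const.sub continuous_id).norm)).measurableSet).inter
        ((isOpen_lt ((continuous_const.sub continuous_id).norm) continuous_const).measurableSet)
    have hannBall : ann ⊆ Metric.ball x r := by
      intro y hy
      rw [Metric.mem_ball, dist_eq_norm, ← norm_sub_rev]
      exact hy.2
    have hannVol : volume ann < ⊤ :=
      lt_of_le_of_lt (measure_mono hannBall) measure_ball_lt_top
    have hsetEq : {y : E3 | δ < ‖x - y‖} = ann ∪ far := by
      ext y
      simp only [Set.mem_setOf_eq, Set.mem_union, hanndef, hfardef]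
      constructor
      · intro h
        rcases lt_or_ge ‖x - y‖ r with h' | h'
        · exact Or.inl ⟨h, h'⟩
        · exact Or.inr h'
      · rintro (⟨h, _⟩ | h)
        · exact h
        · exact lt_of_lt_of_le hδr h
    have hdisj : Disjoint ann far := by
      rw [Set.disjoint_left]
      rintro y ⟨_, h2⟩ h3
      exact absurd h3 (not_le.mpr h2)
    have hintAnn : IntegrableOn (fun y => K (x - y) * ψ y ^ 2) ann volume :=
      (hfint x δ hδ).mono_set (fun y hy => le_of_lt hy.1)
    rw [hsetEq, setIntegral_union hdisj hfarMeas hintAnn hintFar, hFdef, add_sub_cancel_right]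
    -- now bound |∫_ann|
    have hKann : IntegrableOn (fun y => K (x - y)) ann volume := by
      refine Measure.integrableOn_of_bounded (M := MΩ / δ ^ 3) hannVol.ne
        (hKsub x) ?_
      filter_upwards [ae_restrict_mem hannMeas] with y hy
      have hxy : x - y ≠ 0 := by
        intro h
        have := hy.1; rw [h] at this; simp at this; linarith
      rw [Real.norm_eq_abs]
      exact (hKbd _ hxy).trans (div_cube_mono hMΩnn hδ hy.1.le)
    have hzero : (∫ y in ann, K (x - y)) = 0 := by
      have h1 : ann = (fun y => x - y) ⁻¹' {z : E3 | δ < ‖z‖ ∧ ‖z‖ < r} := by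
        ext y; simp [hanndef]
      rw [h1, ← shift_int K x {z : E3 | δ < ‖z‖ ∧ ‖z‖ < r}]
      exact hcancel δ r hδ hδr
    have hsub_int : IntegrableOn (fun y => K (x - y) * (ψ y ^ 2 - ψ x ^ 2)) ann volume := by
      have heq : (fun y => K (x - y) * (ψ y ^ 2 - ψ x ^ 2)) =
          (fun y => K (x - y) * ψ y ^ 2 - K (x - y) * ψ x ^ 2) := by
        funext y; ring
      rw [heq]
      exact hintAnn.sub (hKann.mul_const _)
    have hsplit : (∫ y in ann, K (x - y) * ψ y ^ 2) =
        ∫ y in ann, K (x - y) * (ψ y ^ 2 - ψ x ^ 2) := by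
      have heq : ∀ y, K (x - y) * ψ y ^ 2 =
          K (x - y) * (ψ y ^ 2 - ψ x ^ 2) + K (x - y) * ψ x ^ 2 := by
        intro y; ring
      simp_rw [heq]
      rw [integral_add hsub_int (hKann.mul_const _), integral_mul_const, hzero, zero_mul,
        add_zero]
    rw [hsplit]
    -- pointwise bound on the annulus
    have hbd2 : ∀ y ∈ ann, |K (x - y) * (ψ y ^ 2 - ψ x ^ 2)| ≤ B * hb (x - y) := by
      intro y hy
      have hxy : x - y ≠ 0 := by
        intro h
        have := hy.1; rw [h] at this; simp at this; linarith
      have hpos : 0 < ‖x - y‖ := norm_pos_iff.mpr hxy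
      have h5 : hb (x - y) = ‖x - y‖ ^ α / ‖x - y‖ ^ (3:ℕ) := by
        simp only [hbdef]
        rw [show (α - 3 : ℝ) = α - ((3:ℕ):ℝ) by norm_num, Real.rpow_sub hpos,
          Real.rpow_natCast]
      have h6 : |ψ y - ψ x| ≤ C * ‖x - y‖ ^ α := by
        have := hHol y x
        rwa [norm_sub_rev] at this
      have h7 : |ψ y + ψ x| ≤ 2 * M := by
        refine (abs_add_le _ _).trans ?_
        have := hM y; have := hM x; linarith
      have h8 : |ψ y ^ 2 - ψ x ^ 2| ≤ C * ‖x - y‖ ^ α * (2 * M) := by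
        have heq : ψ y ^ 2 - ψ x ^ 2 = (ψ y - ψ x) * (ψ y + ψ x) := by ring
        rw [heq, abs_mul]
        exact mul_le_mul h6 h7 (abs_nonneg _) (by positivity)
      rw [abs_mul]
      have h9 : |K (x - y)| * |ψ y ^ 2 - ψ x ^ 2| ≤
          (MΩ / ‖x - y‖ ^ 3) * (C * ‖x - y‖ ^ α * (2 * M)) :=
        mul_le_mul (hKbd _ hxy) h8 (abs_nonneg _) (by positivity)
      refine h9.trans (le_of_eq ?_)
      rw [h5, hBdef]
      field_simp
    have hbann : IntegrableOn (fun y => B * hb (x - y)) ann volume := by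
      refine Integrable.const_mul ?_ B
      refine Measure.integrableOn_of_bounded (M := δ ^ (α - 3)) hannVol.ne ?_ ?_
      · exact ((((continuous_const.sub continuous_id).norm).measurable).pow
          measurable_const).aestronglyMeasurable
      · filter_upwards [ae_restrict_mem hannMeas] with y hy
        rw [Real.norm_eq_abs, abs_of_nonneg (hbnn _)]
        exact Real.rpow_le_rpow_of_nonpos hδ hy.1.le (by linarith)
    calc |∫ y in ann, K (x - y) * (ψ y ^ 2 - ψ x ^ 2)|
        ≤ ∫ y in ann, |K (x - y) * (ψ y ^ 2 - ψ x ^ 2)| := by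
          simpa only [Real.norm_eq_abs] using
            norm_integral_le_integral_norm (μ := volume.restrict ann)
              (fun y => K (x - y) * (ψ y ^ 2 - ψ x ^ 2))
      _ ≤ ∫ y in ann, B * hb (x - y) :=
          setIntegral_mono_on hsub_int.abs hbann hannMeas hbd2
      _ = B * ∫ y in ann, hb (x - y) := integral_const_mul _ _
      _ = B * ∫ z in {z : E3 | δ < ‖z‖ ∧ ‖z‖ < r}, hb z := by
          congr 1
          rw [shift_int hb x {z : E3 | δ < ‖z‖ ∧ ‖z‖ < r}]
          try rfl
          try (congr 1; ext y; simp [hanndef, Set.mem_preimage, Set.mem_setOf_eq])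
      _ ≤ B * Jr := by
          refine mul_le_mul_of_nonneg_left ?_ hBnn
          refine setIntegral_mono_set hbintr ?_ ?_
          · exact Filter.Eventually.of_forall (fun z => hbnn z)
          · exact HasSubset.Subset.eventuallyLE
              (fun z hz => ⟨lt_trans hδ hz.1, hz.2⟩)
  have hgF : |g x - F| ≤ B * Jr := by
    have htend : Tendsto (fun δ : ℝ =>
        |(∫ y in {y : E3 | δ < ‖x - y‖}, K (x - y) * ψ y ^ 2) - F|)
        (nhdsWithin 0 (Set.Ioi 0)) (𝓝 |g x - F|) :=
      ((hg x).sub tendsto_const_nhds).abs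
    refine le_of_tendsto htend ?_
    filter_upwards [Ioo_mem_nhdsGT_of_mem (Set.mem_Ico.mpr ⟨le_refl 0, hr0⟩)] with δ hδ
    exact hIF δ hδ.1 hδ.2
  -- Step 2 : |F| < ε / 2
  have hS2meas : MeasurableSet {y : E3 | ‖x‖/2 < ‖y‖} :=
    (isOpen_lt continuous_const continuous_norm).measurableSet
  set G : E3 → ℝ := fun y => (8*MΩ/‖x‖^3) * ψ y ^ 2 +
      (MΩ/r^3) * Set.indicator {y : E3 | ‖x‖/2 < ‖y‖} (fun y => ψ y ^ 2) y with hGdef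
  have hGint : Integrable G volume := by
    refine (hintψ2.const_mul _).add ?_
    exact (hintψ2.indicator hS2meas).const_mul _
  have hGnn : ∀ y, 0 ≤ G y := by
    intro y
    refine add_nonneg (mul_nonneg (by positivity) (sq_nonneg _)) ?_
    refine mul_nonneg (by positivity) ?_
    exact Set.indicator_nonneg (fun z _ => sq_nonneg _) _
  have hGbd : ∀ y ∈ far, |K (x - y) * ψ y ^ 2| ≤ G y := by
    intro y hy
    have hy' : r ≤ ‖x - y‖ := hy
    have hxy : x - y ≠ 0 := by
      intro h
      rw [h] at hy'; simp at hy'; linarith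
    rw [abs_mul, abs_of_nonneg (sq_nonneg (ψ y))]
    by_cases hcase : ‖x‖/2 < ‖y‖
    · have h1 : |K (x - y)| ≤ MΩ / r ^ 3 :=
        (hKbd _ hxy).trans (div_cube_mono hMΩnn hr0 hy')
      have h2 : |K (x - y)| * ψ y ^ 2 ≤ (MΩ/r^3) * ψ y ^ 2 :=
        mul_le_mul_of_nonneg_right h1 (sq_nonneg _)
      show _ ≤ (8*MΩ/‖x‖^3) * ψ y ^ 2 +
        (MΩ/r^3) * Set.indicator {y : E3 | ‖x‖/2 < ‖y‖} (fun y => ψ y ^ 2) y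
      rw [Set.indicator_of_mem (show y ∈ {y : E3 | ‖x‖/2 < ‖y‖} from hcase)
        (fun y => ψ y ^ 2)]
      have h3 : 0 ≤ (8*MΩ/‖x‖^3) * ψ y ^ 2 := mul_nonneg (by positivity) (sq_nonneg _)
      linarith
    · push_neg at hcase
      have h1 : ‖x‖/2 ≤ ‖x - y‖ := by
        have := norm_sub_norm_le x y
        linarith
      have h2 : |K (x - y)| ≤ 8*MΩ/‖x‖^3 := by
        refine (hKbd _ hxy).trans ?_
        have h4 : MΩ / ‖x - y‖ ^ 3 ≤ MΩ / (‖x‖/2)^3 :=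
          div_cube_mono hMΩnn (by positivity) h1
        refine h4.trans (le_of_eq ?_)
        rw [div_pow]
        rw [div_div_eq_mul_div]
        ring_nf
      have h5 : |K (x - y)| * ψ y ^ 2 ≤ (8*MΩ/‖x‖^3) * ψ y ^ 2 :=
        mul_le_mul_of_nonneg_right h2 (sq_nonneg _)
      show _ ≤ (8*MΩ/‖x‖^3) * ψ y ^ 2 +
        (MΩ/r^3) * Set.indicator {y : E3 | ‖x‖/2 < ‖y‖} (fun y => ψ y ^ 2) y
      rw [Set.indicator_of_notMem
        (show y ∉ {y : E3 | ‖x‖/2 < ‖y‖} from fun h => absurd h (not_lt.mpr hcase))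
        (fun y => ψ y ^ 2)]
      rw [mul_zero, add_zero]
      exact h5
  have hFbd : |F| ≤ (8*MΩ/‖x‖^3) * Iψ +
      (MΩ/r^3) * ∫ y in {y : E3 | ‖x‖/2 < ‖y‖}, ψ y ^ 2 := by
    have h1 : |F| ≤ ∫ y in far, |K (x - y) * ψ y ^ 2| := by
      simpa only [Real.norm_eq_abs] using
        norm_integral_le_integral_norm (μ := volume.restrict far)
          (fun y => K (x - y) * ψ y ^ 2)
    have h2 : (∫ y in far, |K (x - y) * ψ y ^ 2|) ≤ ∫ y in far, G y :=
      setIntegral_mono_on hintFar.abs hGint.integrableOn hfarMeas hGbd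
    have h3 : (∫ y in far, G y) ≤ ∫ y, G y :=
      setIntegral_le_integral hGint (Filter.Eventually.of_forall hGnn)
    have h4 : (∫ y, G y) = (8*MΩ/‖x‖^3) * Iψ +
        (MΩ/r^3) * ∫ y in {y : E3 | ‖x‖/2 < ‖y‖}, ψ y ^ 2 := by
      simp only [hGdef]
      rw [integral_add (hintψ2.const_mul _) ((hintψ2.indicator hS2meas).const_mul _),
        integral_const_mul, integral_const_mul, integral_indicator hS2meas]
    linarith
  -- tail comparison
  have htail : (∫ y in {y : E3 | ‖x‖/2 < ‖y‖}, ψ y ^ 2) ≤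
      ∫ y in {y : E3 | ((n₁:ℝ)) < ‖y‖}, ψ y ^ 2 := by
    refine setIntegral_mono_set hintψ2.integrableOn
      (Filter.Eventually.of_forall (fun y => sq_nonneg _)) ?_
    refine HasSubset.Subset.eventuallyLE ?_
    intro y hy
    have hR2 : 2*(n₁:ℝ) + 1 ≤ R := le_max_left _ _
    have : (n₁:ℝ) < ‖x‖/2 := by
      simp only [Set.mem_setOf_eq] at hy ⊢
      linarith [hx, hR2]
    exact lt_trans this hy
  have hterm2 : (MΩ/r^3) * (∫ y in {y : E3 | ‖x‖/2 < ‖y‖}, ψ y ^ 2) < ε/4 := by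
    refine lt_of_le_of_lt ?_ hn₁
    exact mul_le_mul_of_nonneg_left htail (by positivity)
  have hterm1 : (8*MΩ/‖x‖^3) * Iψ < ε/4 := by
    have hRx : 32*MΩ*Iψ/ε + 1 ≤ ‖x‖ := le_trans (le_max_right _ _) hx.le
    have hx3 : ‖x‖ ≤ ‖x‖^3 := le_self_pow₀ hx1 (by norm_num)
    rw [div_mul_eq_mul_div, div_lt_iff₀ (by positivity : (0:ℝ) < ‖x‖^3)]
    have h32 : 32*MΩ*Iψ/ε < ‖x‖ := by linarith
    rw [div_lt_iff₀ hε] at h32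
    nlinarith [mul_nonneg hMΩnn hIψnn]
  have hFsmall : |F| < ε/2 := by
    calc |F| ≤ (8*MΩ/‖x‖^3) * Iψ +
        (MΩ/r^3) * ∫ y in {y : E3 | ‖x‖/2 < ‖y‖}, ψ y ^ 2 := hFbd
      _ < ε/4 + ε/4 := by exact add_lt_add hterm1 hterm2
      _ = ε/2 := by ring
  calc |g x| = |(g x - F) + F| := by ring_nf
    _ ≤ |g x - F| + |F| := abs_add_le _ _
    _ < ε/4 + ε/2 := by
        refine add_lt_add_of_le_of_lt (le_trans hgF ?_) hFsmall
        exact hBJr.le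
    _ < ε := by linarith
end
end
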